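/- Fix $\rho > 0$ with $2\pi \rho^2 < 1$ and $M > 0$. There exist a probability measure $G$ on $\mathbb{R}$ and a function $\alpha$ with $|\alpha(u)| \leq M$ for all $u$, such that the marginal density $f(z) = \int \varphi(z - u)\, dG(u)$ satisfies $f(0) \geq \rho$ and the posterior mean $\mu(z) = \frac{\int \alpha(u)\varphi(z - u)\, dG(u)}{f(z)}$ satisfies $\mu'(0) = M\sqrt{-\log(2\pi \rho^2)}$. (Specifically, take $G = \frac{1}{2}(\delta_{-k} + \delta_k)$ with $k = \sqrt{-\log(2\pi\rho^2)}$ and $\alpha(u) = M\,\mathrm{sign}(u)$.) -/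

import Mathlib

open MeasureTheory ENNReal

lemma integral_half_dirac (a b : ℝ) (f : ℝ → ℝ) :
    ∫ x, f x ∂((2 : ℝ≥0∞)⁻¹ • (Measure.dirac a + Measure.dirac b)) = (f a + f b) / 2 := by
  have hia : Integrable f (Measure.dirac a) :=
    (integrable_const (f a)).congr (by rw [MeasureTheory.ae_dirac_eq]; exact Filter.eventually_pure.2 rfl)
  have hib : Integrable f (Measure.dirac b) :=
    (integrable_const (f b)).congr (by rw [MeasureTheory.ae_dirac_eq]; exact Filter.eventually_pure.2 rfl)
  rw [integral_smul_measure, integral_add_measure hia hib, integral_dirac, integral_dirac]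
  simp [ENNReal.toReal_inv]
  ring

lemma hasDerivAt_gauss (φ : ℝ → ℝ)
    (hφ : ∀ x, φ x = (Real.sqrt (2 * Real.pi))⁻¹ * Real.exp (-(x ^ 2) / 2))
    (c z : ℝ) :
    HasDerivAt (fun z => φ (z - c)) (-(z - c) * φ (z - c)) z := by
  have h1 : HasDerivAt (fun z : ℝ => -((z - c) ^ 2) / 2) (-(z - c)) z := by
    have h0 : HasDerivAt (fun z : ℝ => (z - c) ^ 2) (2 * (z - c)) z := by
      have := ((hasDerivAt_id z).sub_const c).fun_pow 2
      simpa using this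
    have := (h0.fun_neg).div_const 2
    exact this.congr_deriv (by ring)
  have h2 := (h1.exp).const_mul (Real.sqrt (2 * Real.pi))⁻¹
  simp only [hφ]
  exact h2.congr_deriv (by ring)

/-- Lower-bound construction for the worst-case first derivative of the
conditional response function under standard Gaussian measurement error: for
any `ρ > 0` with `2πρ² < 1` and any `M > 0`, there are a prior `G` and a
response `α` bounded by `M` whose marginal density at `0` is at least `ρ`
while the posterior mean has derivative `M √(-log(2πρ²))` at `0`. -/
theorem stmt9
    (ρ M : ℝ) (hρ : 0 < ρ) (hρ1 : 2 * Real.pi * ρ ^ 2 < 1) (hM : 0 < M)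
    (φ : ℝ → ℝ)
    (hφ : ∀ x, φ x = (Real.sqrt (2 * Real.pi))⁻¹ * Real.exp (-(x ^ 2) / 2)) :
    ∃ G : Measure ℝ, IsProbabilityMeasure G ∧ ∃ α : ℝ → ℝ,
      (∀ u, |α u| ≤ M)
      ∧ ρ ≤ (∫ u, φ ((0 : ℝ) - u) ∂G)
      ∧ deriv (fun z => (∫ u, α u * φ (z - u) ∂G) / (∫ u, φ (z - u) ∂G)) 0
          = M * Real.sqrt (-Real.log (2 * Real.pi * ρ ^ 2)) := by
  have hπ : 0 < 2 * Real.pi := by positivity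
  have hpos : 0 < 2 * Real.pi * ρ ^ 2 := by positivity
  have hlog : Real.log (2 * Real.pi * ρ ^ 2) < 0 := Real.log_neg hpos hρ1
  set k : ℝ := Real.sqrt (-Real.log (2 * Real.pi * ρ ^ 2)) with hk
  have hkpos : 0 < k := Real.sqrt_pos.2 (by linarith)
  have hk2 : k ^ 2 = -Real.log (2 * Real.pi * ρ ^ 2) :=
    Real.sq_sqrt (by linarith)
  have hφeven : ∀ x, φ (-x) = φ x := by
    intro x; rw [hφ, hφ, neg_sq]
  have hφk : φ k = ρ := by
    rw [hφ]
    have hexp : Real.exp (-(k ^ 2) / 2) = Real.sqrt (2 * Real.pi * ρ ^ 2) := by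
      rw [Real.sqrt_eq_rpow, Real.rpow_def_of_pos hpos, hk2]
      ring_nf
    rw [hexp, Real.sqrt_mul (le_of_lt hπ), Real.sqrt_sq hρ.le]
    rw [inv_mul_cancel_left₀ (by positivity)]
  set G : Measure ℝ := (2 : ℝ≥0∞)⁻¹ • (Measure.dirac (-k) + Measure.dirac k) with hG
  refine ⟨G, ⟨?_⟩, fun u => if u ≤ 0 then -M else M, ?_, ?_, ?_⟩
  · rw [hG]
    simp [ENNReal.inv_mul_cancel]
    exact ENNReal.inv_two_add_inv_two
  · intro u
    by_cases h : u ≤ 0 <;> simp [h, abs_of_pos hM, abs_of_neg (neg_neg_iff_pos.2 hM), le_refl]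
  · rw [hG, integral_half_dirac]
    simp only [sub_neg_eq_add, zero_add, zero_sub, hφeven, hφk]
    linarith
  · have hα : ∀ z : ℝ, (fun u => (if u ≤ 0 then -M else M) * φ (z - u)) (-k) = -M * φ (z + k) := by
      intro z
      simp [le_of_lt (neg_neg_iff_pos.2 hkpos), sub_neg_eq_add]
    have hfun : (fun z => (∫ u, (if u ≤ 0 then -M else M) * φ (z - u) ∂G) / (∫ u, φ (z - u) ∂G))
        = fun z => ((-M * φ (z + k) + M * φ (z - k)) / 2) / ((φ (z + k) + φ (z - k)) / 2) := by
      funext z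
      rw [hG, integral_half_dirac, integral_half_dirac]
      simp [le_of_lt (neg_neg_iff_pos.2 hkpos), not_le.2 hkpos, sub_neg_eq_add]
    rw [hfun]
    -- derivatives
    have hNd : HasDerivAt (fun z => (-M * φ (z + k) + M * φ (z - k)) / 2)
        ((-M * (-(0 + k) * φ (0 + k)) + M * (-(0 - k) * φ (0 - k))) / 2) 0 := by
      have h1 : HasDerivAt (fun z => φ (z + k)) (-(0 + k) * φ (0 + k)) 0 := by
        have := hasDerivAt_gauss φ hφ (-k) 0
        simpa [sub_neg_eq_add] using this
      have h2 := hasDerivAt_gauss φ hφ k 0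
      exact (((h1.const_mul (-M)).add (h2.const_mul M)).div_const 2)
    have hDd : HasDerivAt (fun z => (φ (z + k) + φ (z - k)) / 2)
        ((-(0 + k) * φ (0 + k) + -(0 - k) * φ (0 - k)) / 2) 0 := by
      have h1 : HasDerivAt (fun z => φ (z + k)) (-(0 + k) * φ (0 + k)) 0 := by
        have := hasDerivAt_gauss φ hφ (-k) 0
        simpa [sub_neg_eq_add] using this
      have h2 := hasDerivAt_gauss φ hφ k 0
      exact ((h1.add h2).div_const 2)
    have hD0 : ((φ (0 + k) + φ (0 - k)) / 2) ≠ 0 := by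
      simp only [zero_add, zero_sub, hφeven, hφk]
      positivity
    have := (hNd.fun_div hDd hD0).deriv
    rw [this]
    simp only [zero_add, zero_sub, hφeven, hφk]
    have hρ' : ρ ≠ 0 := hρ.ne'
    field_simp
    ring
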